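/- Let π be a probability measure (the prior) on a parameter space Θ, let ℓ : Θ × X → ℝ be measurable with |ℓ(θ,x)| ≤ B for all θ, x, and for a dataset S = (x_1,…,x_m) ∈ X^m define the posterior-sampling mechanism A(S) as the probability measure with density proportional to exp(−∑_{i=1}^m ℓ(θ, x_i)) with respect to π (assuming the normalizing constant is finite and positive for every S). Then A is 4B-differentially private: for all adjacent datasets S, S' and all measurable O ⊆ Θ, A(S)(O) ≤ e^{4B} · A(S')(O). -/
import Mathlib


open MeasureTheory Real

/-- Two datasets of size `m` are adjacent if they differ in at most one entry. -/
def Adjacent {X : Type*} {m : ℕ} (S S' : Fin m → X) : Prop :=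
  ∃ i : Fin m, ∀ j : Fin m, j ≠ i → S j = S' j

/-- The Gibbs posterior-sampling mechanism: given a prior `μ₀` and a loss `ℓ`, the
output distribution on a dataset `S` has density proportional to
`exp(−∑ᵢ ℓ(θ, xᵢ))` with respect to `μ₀`. -/
noncomputable def posteriorMechanism {X Θ : Type*} [MeasurableSpace X]
    [MeasurableSpace Θ] (μ₀ : Measure Θ) {m : ℕ} (ℓ : Θ → X → ℝ)
    (S : Fin m → X) : Measure Θ :=
  μ₀.withDensity fun θ => ENNReal.ofReal
    (exp (-∑ i : Fin m, ℓ θ (S i)) / ∫ θ', exp (-∑ i : Fin m, ℓ θ' (S i)) ∂μ₀)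

/-- one-posterior-sample privacy, Wang et al., used by the paper for
the Bayesian GAN: if `|ℓ(θ,x)| ≤ B` and the normalizing constant of the Gibbs
posterior is finite and positive for every dataset, then sampling once from the
posterior is `4B`-differentially private. -/
theorem posterior_sampling_is_dp {X Θ : Type*} [MeasurableSpace X] [MeasurableSpace Θ]
    (μ₀ : Measure Θ) [IsProbabilityMeasure μ₀] {m : ℕ}
    (ℓ : Θ → X → ℝ) (hmeas : Measurable (Function.uncurry ℓ))
    (B : ℝ) (hbd : ∀ θ x, |ℓ θ x| ≤ B)
    (hZ : ∀ S : Fin m → X,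
      0 < ∫ θ, exp (-∑ i : Fin m, ℓ θ (S i)) ∂μ₀) :
    ∀ S S' : Fin m → X, Adjacent S S' → ∀ O : Set Θ, MeasurableSet O →
      posteriorMechanism μ₀ ℓ S O ≤
        ENNReal.ofReal (exp (4 * B)) * posteriorMechanism μ₀ ℓ S' O := by
  rintro S S' ⟨i, hi⟩ O hO
  -- measurability of each slice
  have hmx : ∀ x : X, Measurable fun θ => ℓ θ x := fun x =>
    hmeas.comp (measurable_id.prodMk measurable_const)
  have hmsum : ∀ T : Fin m → X, Measurable fun θ => exp (-∑ j : Fin m, ℓ θ (T j)) :=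
    fun T => measurable_exp.comp (Finset.measurable_sum _ fun j _ => hmx (T j)).neg
  -- integrability of the exponential weights
  have hint : ∀ T : Fin m → X,
      Integrable (fun θ => exp (-∑ j : Fin m, ℓ θ (T j))) μ₀ := by
    intro T
    refine (integrable_const (exp (m * B))).mono' (hmsum T).aestronglyMeasurable ?_
    filter_upwards with θ
    rw [Real.norm_eq_abs, abs_of_pos (exp_pos _)]
    apply exp_le_exp.2
    calc -∑ j : Fin m, ℓ θ (T j) = ∑ j : Fin m, -ℓ θ (T j) := by
          rw [Finset.sum_neg_distrib]
      _ ≤ ∑ j : Fin m, B := Finset.sum_le_sum fun j _ =>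
          (neg_le_abs _).trans (hbd _ _)
      _ = m * B := by simp [mul_comm]
  -- the two sums differ by at most 2B
  have hdiff : ∀ θ, |(∑ j : Fin m, ℓ θ (S j)) - ∑ j : Fin m, ℓ θ (S' j)| ≤ 2 * B := by
    intro θ
    have heq : (∑ j : Fin m, ℓ θ (S j)) - ∑ j : Fin m, ℓ θ (S' j)
        = ℓ θ (S i) - ℓ θ (S' i) := by
      rw [← Finset.sum_sub_distrib, Finset.sum_eq_single i]
      · intro j _ hj; rw [hi j hj]; ring
      · simp
    rw [heq]
    calc |ℓ θ (S i) - ℓ θ (S' i)| ≤ |ℓ θ (S i)| + |ℓ θ (S' i)| := abs_sub _ _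
      _ ≤ B + B := add_le_add (hbd _ _) (hbd _ _)
      _ = 2 * B := by ring
  -- pointwise comparisons of the weights
  have hpt : ∀ θ, exp (-∑ j : Fin m, ℓ θ (S j))
      ≤ exp (2 * B) * exp (-∑ j : Fin m, ℓ θ (S' j)) := by
    intro θ
    rw [← exp_add]
    apply exp_le_exp.2
    linarith [(abs_le.1 (hdiff θ)).1]
  have hpt' : ∀ θ, exp (-∑ j : Fin m, ℓ θ (S' j))
      ≤ exp (2 * B) * exp (-∑ j : Fin m, ℓ θ (S j)) := by
    intro θ
    rw [← exp_add]
    apply exp_le_exp.2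
    linarith [(abs_le.1 (hdiff θ)).2]
  -- normalizing constants
  have hZS := hZ S
  have hZS' := hZ S'
  have hZle : (∫ θ, exp (-∑ j : Fin m, ℓ θ (S' j)) ∂μ₀)
      ≤ exp (2 * B) * ∫ θ, exp (-∑ j : Fin m, ℓ θ (S j)) ∂μ₀ := by
    calc (∫ θ, exp (-∑ j : Fin m, ℓ θ (S' j)) ∂μ₀)
        ≤ ∫ θ, exp (2 * B) * exp (-∑ j : Fin m, ℓ θ (S j)) ∂μ₀ :=
          integral_mono (hint S') ((hint S).const_mul _) hpt'
      _ = _ := integral_const_mul _ _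
  have h4 : exp (2 * B) * exp (2 * B) = exp (4 * B) := by
    rw [← exp_add]; ring_nf
  -- pointwise density comparison
  have hdens : ∀ θ,
      exp (-∑ j : Fin m, ℓ θ (S j)) / (∫ θ', exp (-∑ j : Fin m, ℓ θ' (S j)) ∂μ₀)
        ≤ exp (4 * B) *
          (exp (-∑ j : Fin m, ℓ θ (S' j)) /
            (∫ θ', exp (-∑ j : Fin m, ℓ θ' (S' j)) ∂μ₀)) := by
    intro θ
    rw [mul_div_assoc']
    rw [div_le_div_iff₀ hZS hZS']
    have key := mul_le_mul (hpt θ) hZle hZS'.le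
      (by positivity)
    calc exp (-∑ j : Fin m, ℓ θ (S j)) * (∫ θ', exp (-∑ j : Fin m, ℓ θ' (S' j)) ∂μ₀)
        ≤ (exp (2 * B) * exp (-∑ j : Fin m, ℓ θ (S' j))) *
          (exp (2 * B) * ∫ θ', exp (-∑ j : Fin m, ℓ θ' (S j)) ∂μ₀) := key
      _ = (exp (2 * B) * exp (2 * B)) *
          (exp (-∑ j : Fin m, ℓ θ (S' j)) * ∫ θ', exp (-∑ j : Fin m, ℓ θ' (S j)) ∂μ₀) := by
          ring
      _ = exp (4 * B) * exp (-∑ j : Fin m, ℓ θ (S' j)) *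
          (∫ θ', exp (-∑ j : Fin m, ℓ θ' (S j)) ∂μ₀) := by rw [h4]; ring
  -- conclude in ℝ≥0∞
  rw [posteriorMechanism, posteriorMechanism, withDensity_apply _ hO, withDensity_apply _ hO]
  calc (∫⁻ θ in O, ENNReal.ofReal
          (exp (-∑ j : Fin m, ℓ θ (S j)) /
            ∫ θ', exp (-∑ j : Fin m, ℓ θ' (S j)) ∂μ₀) ∂μ₀)
      ≤ ∫⁻ θ in O, ENNReal.ofReal (exp (4 * B)) * ENNReal.ofReal
          (exp (-∑ j : Fin m, ℓ θ (S' j)) /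
            ∫ θ', exp (-∑ j : Fin m, ℓ θ' (S' j)) ∂μ₀) ∂μ₀ := by
        apply lintegral_mono
        intro θ
        exact le_trans (ENNReal.ofReal_le_ofReal (hdens θ))
          (le_of_eq (ENNReal.ofReal_mul (exp_pos _).le))
    _ = _ := lintegral_const_mul' _ _ ENNReal.ofReal_ne_top
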